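/- A k-synchronizable system S reaches an empty-buffer deadlock configuration under the asynchronous semantics if and only if the k-synchronous semantics of S admits a matched execution (every sent message is received) reaching an empty-buffer deadlock configuration. -/

import Mathlib

namespace MP

abbrev Pid := ℕ
abbrev Val := ℕ
abbrev Mid := ℕ

/-- Send and receive actions, tagged with a message identifier. -/
inductive Action : Type where
  | snd (i : Mid) (p q : Pid) (v : Val)
  | rcv (i : Mid) (q : Pid) (v : Val)
deriving DecidableEq

abbrev Exec := List Action

namespace Action
def proc : Action → Pid
  | snd _ p _ _ => p
  | rcv _ q _ => q
def dest : Action → Pid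
  | snd _ _ q _ => q
  | rcv _ q _ => q
def mid : Action → Mid
  | snd i _ _ _ => i
  | rcv i _ _ => i
def isSend : Action → Prop
  | snd _ _ _ _ => True
  | rcv _ _ _ => False
def isRecv : Action → Prop
  | snd _ _ _ _ => False
  | rcv _ _ _ => True
end Action

def sendIds (e : Exec) : List Mid :=
  e.filterMap fun a => match a with | .snd i _ _ _ => some i | _ => none
def recvIds (e : Exec) : List Mid :=
  e.filterMap fun a => match a with | .rcv i _ _ => some i | _ => none

/-- Every receive is matched by an earlier send with the same id, destination and payload. -/
def SendBeforeRecv (e : Exec) : Prop :=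
  ∀ (n : ℕ) (i : Mid) (q : Pid) (v : Val), e[n]? = some (Action.rcv i q v) →
    ∃ m < n, ∃ p : Pid, e[m]? = some (Action.snd i p q v)

def ValidTrace (e : Exec) : Prop :=
  (sendIds e).Nodup ∧ (recvIds e).Nodup ∧ SendBeforeRecv e

/-- Projection of an execution on the actions of process `p` (program order). -/
def proj (p : Pid) (e : Exec) : Exec := e.filter (fun a => a.proc == p)

/-- Two executions are trace-equivalent (same happens-before relation) iff one is a
permutation of the other preserving per-process program order (message identifiers
make the matching relation coincide). -/
def TraceEquiv (e e' : Exec) : Prop :=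
  e.Perm e' ∧ ∀ p, proj p e = proj p e'

/-- One step of the happens-before relation on positions: program order or matching. -/
def hbBase (e : Exec) (m n : ℕ) : Prop :=
  m < n ∧ ((∃ a b, e[m]? = some a ∧ e[n]? = some b ∧ a.proc = b.proc) ∨
    (∃ i p q v, e[m]? = some (.snd i p q v) ∧ e[n]? = some (.rcv i q v)))

/-- The happens-before (causal) relation of a trace. -/
def hb (e : Exec) : ℕ → ℕ → Prop := Relation.TransGen (hbBase e)

/-- Causal delivery: messages sent to the same process are received in an order
consistent with the causal order of their sends. -/
def CausalDelivery (e : Exec) : Prop :=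
  ∀ (m n n' : ℕ) (i j : Mid) (p p' q : Pid) (v v' : Val),
    e[m]? = some (Action.snd i p q v) → e[n]? = some (Action.snd j p' q v') →
    hb e m n → e[n']? = some (Action.rcv j q v') →
      ∃ m' < n', e[m']? = some (Action.rcv i q v)

inductive Kind | S | R
deriving DecidableEq

/-- The `X`-action (send or receive) of conflict-graph node `i` in execution `e`. -/
def actionAt (e : Exec) (i : Mid) : Kind → Action → Prop
  | .S, a => (∃ p q v, a = .snd i p q v) ∧ a ∈ e
  | .R, a => (∃ q v, a = .rcv i q v) ∧ a ∈ e

def CGNode (e : Exec) (i : Mid) : Prop := ∃ p q v, Action.snd i p q v ∈ e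

/-- Conflict-graph edge from node `i` to node `j` with label `XY`: the `X`-action of `i`
and the `Y`-action of `j` are by the same process, with the `X`-action of `i` first. -/
def CGEdge (e : Exec) (X Y : Kind) (i j : Mid) : Prop :=
  i ≠ j ∧ ∃ (a b : Action) (m n : ℕ), actionAt e i X a ∧ actionAt e j Y b ∧
    a.proc = b.proc ∧ m < n ∧ e[m]? = some a ∧ e[n]? = some b

/-- A (simple) cycle in the conflict graph of `e`, with labelled edges. -/
structure CGCycle (e : Exec) where
  size : ℕ
  pos : 0 < size
  node : ℕ → Mid
  lab : ℕ → Kind × Kind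
  inj : ∀ k l, k < size → l < size → node k = node l → k = l
  edge : ∀ k < size, CGEdge e (lab k).1 (lab k).2 (node k) (node ((k + 1) % size))

/-- A cycle is good if it contains no RS-labelled edge. -/
def CGCycle.Good {e : Exec} (c : CGCycle e) : Prop :=
  ∀ k < c.size, c.lab k ≠ (Kind.R, Kind.S)

def CGStep (e : Exec) (i j : Mid) : Prop := ∃ X Y, CGEdge e X Y i j
def CGReach (e : Exec) : Mid → Mid → Prop := Relation.ReflTransGen (CGStep e)
def SameSCC (e : Exec) (i j : Mid) : Prop := CGReach e i j ∧ CGReach e j i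
/-- `C` is a strongly connected component of the conflict graph of `e`. -/
def IsSCC (e : Exec) (C : Set Mid) : Prop :=
  ∃ i, CGNode e i ∧ C = {j | CGNode e j ∧ SameSCC e i j}

/-- A message passing system: one labelled transition system per process. -/
structure System where
  State : Type
  init : Pid → State
  sendTr : Pid → State → Pid → Val → State → Prop
  recvTr : Pid → State → Val → State → Prop

/-- Asynchronous configuration: local states plus per-destination FIFO buffers. -/
structure Config (S : System) where
  loc : Pid → S.State
  buf : Pid → List (Mid × Val)

def initConfig (S : System) : Config S := ⟨S.init, fun _ => []⟩

inductive Step (S : System) : Config S → Action → Config S → Prop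
  | send {c : Config S} {i : Mid} {p q : Pid} {v : Val} {l' : S.State} :
      S.sendTr p (c.loc p) q v l' →
      Step S c (.snd i p q v)
        ⟨Function.update c.loc p l', Function.update c.buf q (c.buf q ++ [(i, v)])⟩
  | recv {c : Config S} {i : Mid} {q : Pid} {v : Val} {b : List (Mid × Val)} {l' : S.State} :
      c.buf q = (i, v) :: b →
      S.recvTr q (c.loc q) v l' →
      Step S c (.rcv i q v)
        ⟨Function.update c.loc q l', Function.update c.buf q b⟩

inductive Reach (S : System) : Config S → Exec → Config S → Prop
  | nil (c) : Reach S c [] c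
  | cons {c c' c'' : Config S} {a : Action} {e : Exec} :
      Step S c a c' → Reach S c' e c'' → Reach S c (a :: e) c''

/-- Asynchronous executions (send identifiers are fresh, i.e. pairwise distinct). -/
def AsyncExec (S : System) (e : Exec) : Prop :=
  (sendIds e).Nodup ∧ ∃ c, Reach S (initConfig S) e c

/-- A `k`-exchange block: at most `k` sends followed by receives matching only sends
of the same block. -/
def Block (k : ℕ) (b : Exec) : Prop :=
  ∃ sends recvs : Exec, b = sends ++ recvs ∧
    (∀ a ∈ sends, a.isSend) ∧ (∀ a ∈ recvs, a.isRecv) ∧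
    sends.length ≤ k ∧
    (∀ i q v, Action.rcv i q v ∈ recvs → ∃ p, Action.snd i p q v ∈ sends)

/-- Decomposition into a sequence of `k`-exchange blocks. -/
inductive Blocks (k : ℕ) : Exec → Prop
  | nil : Blocks k []
  | app {b e : Exec} : Block k b → Blocks k e → Blocks k (b ++ e)

/-- A trace is `k`-synchronous if some trace-equivalent execution is a sequence of
`k`-exchanges. -/
def KSynchronous (k : ℕ) (e : Exec) : Prop :=
  ∃ e', TraceEquiv e e' ∧ SendBeforeRecv e' ∧ Blocks k e'

/-- Executions of the `k`-synchronous semantics of `S`. -/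
def SyncExec (S : System) (k : ℕ) (e : Exec) : Prop :=
  AsyncExec S e ∧ Blocks k e

/-- Every asynchronous execution of `S` is trace-equivalent to a `k`-synchronous one. -/
def KSynchronizable (S : System) (k : ℕ) : Prop :=
  ∀ e, AsyncExec S e → KSynchronous k e

/-- A borderline violation: a violation to `k`-synchronizability all of whose strict
prefixes are `k`-synchronous. -/
def Borderline (S : System) (k : ℕ) (e : Exec) : Prop :=
  AsyncExec S e ∧ ¬ KSynchronous k e ∧
  ∀ e', e' <+: e → e' ≠ e → KSynchronous k e'

def Matched (e : Exec) : Prop :=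
  ∀ i p q v, Action.snd i p q v ∈ e → Action.rcv i q v ∈ e

def HasUnmatched (e : Exec) : Prop :=
  ∃ i p q v, Action.snd i p q v ∈ e ∧ Action.rcv i q v ∉ e

def NoSend (S : System) (p : Pid) (l : S.State) : Prop := ∀ q v l', ¬ S.sendTr p l q v l'
def NoRecv (S : System) (p : Pid) (l : S.State) : Prop := ∀ v l', ¬ S.recvTr p l v l'
/-- A final local state: no outgoing transitions. -/
def FinalState (S : System) (p : Pid) (l : S.State) : Prop := NoSend S p l ∧ NoRecv S p l

/-- Deadlocked local states: some process is waiting to receive, and every process is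
in a receiving or final state (no send transitions). -/
def DeadlockLocs (S : System) (l : ∀ _ : Pid, S.State) : Prop :=
  (∃ p v l', S.recvTr p (l p) v l') ∧ ∀ q, NoSend S q (l q)

/-- `l` is a `V`-receiving state of `p`: receiving, and `V` is exactly the set of
receivable payloads. -/
def VReceiving (S : System) (p : Pid) (l : S.State) (V : Set Val) : Prop :=
  NoSend S p l ∧ (∃ v l', S.recvTr p l v l') ∧ ∀ v, (v ∈ V ↔ ∃ l', S.recvTr p l v l')

/-- Unspecified reception: some process is in a receiving state but the head of its
buffer is not receivable there. -/
def UnspecifiedReception (S : System) (c : Config S) : Prop :=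
  ∃ p V, VReceiving S p (c.loc p) V ∧ ∃ i v b, c.buf p = (i, v) :: b ∧ v ∉ V

/-- Position `n` of `e` carries an unmatched send with destination `p`. -/
def UnmatchedAt (e : Exec) (n : ℕ) (p : Pid) : Prop :=
  ∃ (i : Mid) (p' : Pid) (v : Val), e[n]? = some (Action.snd i p' p v) ∧ Action.rcv i p v ∉ e

/-- A causally minimal unmatched send with destination `p`. -/
def MinUnmatched (e : Exec) (n : ℕ) (p : Pid) : Prop :=
  UnmatchedAt e n p ∧ ∀ m, UnmatchedAt e m p → ¬ hb e m n

/-- Deterministic transition relations. -/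
def Deterministic (S : System) : Prop :=
  (∀ p l q v l₁ l₂, S.sendTr p l q v l₁ → S.sendTr p l q v l₂ → l₁ = l₂) ∧
  (∀ p l v l₁ l₂, S.recvTr p l v l₁ → S.recvTr p l v l₂ → l₁ = l₂)

/-- No process performs more than `K` consecutive sends. -/
def SendBoundedE (K : ℕ) (e : Exec) : Prop :=
  ∀ p l, l <:+: proj p e → (∀ a ∈ l, a.isSend) → l.length ≤ K
/-- No process performs more than `K` consecutive receives. -/
def RecvBoundedE (K : ℕ) (e : Exec) : Prop :=
  ∀ p l, l <:+: proj p e → (∀ a ∈ l, a.isRecv) → l.length ≤ K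
/-- Flow-bounded system with bound `K`. -/
def FlowBounded (S : System) (K : ℕ) : Prop :=
  ∀ e, AsyncExec S e → SendBoundedE K e ∧ RecvBoundedE K e

/-- A finite-state message passing system. -/
structure FinSystem where
  nS : ℕ
  nP : ℕ
  nV : ℕ
  init : Fin nP → Fin nS
  sendTr : Fin nP → Fin nS → Fin nP → Fin nV → Fin nS → Bool
  recvTr : Fin nP → Fin nS → Fin nV → Fin nS → Bool

def FinSystem.toSystem (F : FinSystem) : System where
  State := Option (Fin F.nS)
  init p := if h : p < F.nP then some (F.init ⟨p, h⟩) else none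
  sendTr p l q v l' :=
    ∃ (hp : p < F.nP) (hq : q < F.nP) (hv : v < F.nV) (s s' : Fin F.nS),
      l = some s ∧ l' = some s' ∧ F.sendTr ⟨p, hp⟩ s ⟨q, hq⟩ ⟨v, hv⟩ s' = true
  recvTr p l v l' :=
    ∃ (hp : p < F.nP) (hv : v < F.nV) (s s' : Fin F.nS),
      l = some s ∧ l' = some s' ∧ F.recvTr ⟨p, hp⟩ s ⟨v, hv⟩ s' = true

/-! ### Auxiliary machinery -/

open List

/-- The (id, payload) pairs sent to `q`, in order. -/
def sendsTo (q : Pid) (e : Exec) : List (Mid × Val) :=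
  e.filterMap fun a => match a with
    | .snd i _ q' v => if q' = q then some (i, v) else none
    | _ => none

/-- The (id, payload) pairs received at `q`, in order. -/
def recvsAt (q : Pid) (e : Exec) : List (Mid × Val) :=
  e.filterMap fun a => match a with
    | .rcv i q' v => if q' = q then some (i, v) else none
    | _ => none

@[simp] lemma sendsTo_nil (q : Pid) : sendsTo q [] = [] := rfl
@[simp] lemma recvsAt_nil (q : Pid) : recvsAt q [] = [] := rfl

lemma sendsTo_append (q : Pid) (l l' : Exec) :
    sendsTo q (l ++ l') = sendsTo q l ++ sendsTo q l' := List.filterMap_append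
lemma recvsAt_append (q : Pid) (l l' : Exec) :
    recvsAt q (l ++ l') = recvsAt q l ++ recvsAt q l' := List.filterMap_append
lemma sendIds_append (l l' : Exec) :
    sendIds (l ++ l') = sendIds l ++ sendIds l' := List.filterMap_append

@[simp] lemma sendsTo_cons_snd_self (q : Pid) (i : Mid) (p : Pid) (v : Val) (e : Exec) :
    sendsTo q (.snd i p q v :: e) = (i, v) :: sendsTo q e := by
  simp [sendsTo, List.filterMap_cons]

lemma sendsTo_cons_snd_ne {q q' : Pid} (h : q' ≠ q) (i : Mid) (p : Pid) (v : Val) (e : Exec) :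
    sendsTo q (.snd i p q' v :: e) = sendsTo q e := by
  simp [sendsTo, List.filterMap_cons, h]

@[simp] lemma sendsTo_cons_rcv (q : Pid) (i : Mid) (q' : Pid) (v : Val) (e : Exec) :
    sendsTo q (.rcv i q' v :: e) = sendsTo q e := by
  simp [sendsTo, List.filterMap_cons]

@[simp] lemma recvsAt_cons_rcv_self (q : Pid) (i : Mid) (v : Val) (e : Exec) :
    recvsAt q (.rcv i q v :: e) = (i, v) :: recvsAt q e := by
  simp [recvsAt, List.filterMap_cons]

lemma recvsAt_cons_rcv_ne {q q' : Pid} (h : q' ≠ q) (i : Mid) (v : Val) (e : Exec) :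
    recvsAt q (.rcv i q' v :: e) = recvsAt q e := by
  simp [recvsAt, List.filterMap_cons, h]

@[simp] lemma recvsAt_cons_snd (q : Pid) (i : Mid) (p q' : Pid) (v : Val) (e : Exec) :
    recvsAt q (.snd i p q' v :: e) = recvsAt q e := by
  simp [recvsAt, List.filterMap_cons]

lemma mem_sendsTo {q : Pid} {i : Mid} {v : Val} {e : Exec} :
    (i, v) ∈ sendsTo q e ↔ ∃ p, Action.snd i p q v ∈ e := by
  constructor
  · intro h
    obtain ⟨a, ha, hfa⟩ := List.mem_filterMap.mp h
    cases a with
    | snd i' p q' v' =>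
      by_cases hq : q' = q
      · subst hq; simp at hfa; obtain ⟨rfl, rfl⟩ := hfa; exact ⟨p, ha⟩
      · simp [hq] at hfa
    | rcv _ _ _ => simp at hfa
  · rintro ⟨p, hp⟩
    exact List.mem_filterMap.mpr ⟨_, hp, by simp⟩

lemma mem_recvsAt {q : Pid} {i : Mid} {v : Val} {e : Exec} :
    (i, v) ∈ recvsAt q e ↔ Action.rcv i q v ∈ e := by
  constructor
  · intro h
    obtain ⟨a, ha, hfa⟩ := List.mem_filterMap.mp h
    cases a with
    | rcv i' q' v' =>
      by_cases hq : q' = q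
      · subst hq; simp at hfa; obtain ⟨rfl, rfl⟩ := hfa; exact ha
      · simp [hq] at hfa
    | snd _ _ _ _ => simp at hfa
  · intro hp
    exact List.mem_filterMap.mpr ⟨_, hp, by simp⟩

lemma mem_sendIds_of_mem {i : Mid} {p q : Pid} {v : Val} {e : Exec}
    (h : Action.snd i p q v ∈ e) : i ∈ sendIds e :=
  List.mem_filterMap.mpr ⟨_, h, rfl⟩

lemma sendsTo_fst_sublist (q : Pid) (e : Exec) :
    (sendsTo q e).map Prod.fst <+ sendIds e := by
  induction e with
  | nil => simp
  | cons a t ih =>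
    match a with
    | .snd i p q' v =>
      by_cases hq : q' = q
      · subst hq
        simpa [sendIds, List.filterMap_cons] using ih.cons₂ i
      · rw [sendsTo_cons_snd_ne hq]
        simpa [sendIds, List.filterMap_cons] using ih.cons i
    | .rcv i q' v => simpa [sendIds, List.filterMap_cons] using ih

lemma recvsAt_eq_nil {q : Pid} {l : Exec} (h : ∀ a ∈ l, a.isSend) : recvsAt q l = [] := by
  apply List.filterMap_eq_nil_iff.mpr
  intro a ha
  match a with
  | .snd _ _ _ _ => rfl
  | .rcv _ _ _ => exact absurd (h _ ha) (by simp [Action.isSend])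

lemma sendsTo_eq_nil {q : Pid} {l : Exec} (h : ∀ a ∈ l, a.isRecv) : sendsTo q l = [] := by
  apply List.filterMap_eq_nil_iff.mpr
  intro a ha
  match a with
  | .rcv _ _ _ => rfl
  | .snd _ _ _ _ => exact absurd (h _ ha) (by simp [Action.isRecv])

lemma sendIds_eq_map_mid {l : Exec} (h : ∀ a ∈ l, a.isSend) :
    sendIds l = l.map Action.mid := by
  induction l with
  | nil => rfl
  | cons a t ih =>
    match a with
    | .snd i p q v =>
      simp only [sendIds, List.filterMap_cons, List.map_cons]
      exact congrArg (i :: ·) (ih fun b hb => h b (List.mem_cons_of_mem _ hb))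
    | .rcv _ _ _ => exact absurd (h _ List.mem_cons_self) (by simp [Action.isSend])

@[simp] lemma proj_nil (p : Pid) : proj p [] = [] := rfl

lemma proj_append (p : Pid) (l l' : Exec) :
    proj p (l ++ l') = proj p l ++ proj p l' := List.filter_append _ _

lemma proj_cons_self {a : Action} {p : Pid} (h : a.proc = p) (e : Exec) :
    proj p (a :: e) = a :: proj p e := by
  simp [proj, List.filter_cons, h]

lemma proj_cons_ne {a : Action} {p : Pid} (h : a.proc ≠ p) (e : Exec) :
    proj p (a :: e) = proj p e := by
  simp [proj, List.filter_cons, h]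

lemma recvsAt_proj (q : Pid) (e : Exec) : recvsAt q (proj q e) = recvsAt q e := by
  induction e with
  | nil => rfl
  | cons a t ih =>
    match a with
    | .snd i p q' v =>
      by_cases hp : (Action.snd i p q' v).proc = q
      · rw [proj_cons_self (a := .snd i p q' v) hp, recvsAt_cons_snd, recvsAt_cons_snd, ih]
      · rw [proj_cons_ne (a := .snd i p q' v) hp, recvsAt_cons_snd, ih]
    | .rcv i q' v =>
      by_cases hq : q' = q
      · subst hq
        rw [proj_cons_self (a := .rcv i q' v) (p := q') rfl, recvsAt_cons_rcv_self,
          recvsAt_cons_rcv_self, ih]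
      · rw [proj_cons_ne (a := .rcv i q' v) hq, recvsAt_cons_rcv_ne hq, ih]

lemma sendIds_proj_sublist (p : Pid) (e : Exec) : sendIds (proj p e) <+ sendIds e :=
  List.Sublist.filterMap _ List.filter_sublist
/-- Local run of a single process through its own actions. -/
inductive LocRun (S : System) (p : Pid) : S.State → Exec → S.State → Prop
  | nil (l : S.State) : LocRun S p l [] l
  | send {l l' l'' : S.State} {i : Mid} {q : Pid} {v : Val} {e : Exec} :
      S.sendTr p l q v l' → LocRun S p l' e l'' → LocRun S p l (.snd i p q v :: e) l''
  | recv {l l' l'' : S.State} {i : Mid} {v : Val} {e : Exec} :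
      S.recvTr p l v l' → LocRun S p l' e l'' → LocRun S p l (.rcv i p v :: e) l''

lemma locRun_nil_inv {S : System} {p : Pid} {l l' : S.State}
    (h : LocRun S p l [] l') : l = l' := by cases h; rfl

lemma locRun_send_inv {S : System} {p : Pid} {l l'' : S.State} {i : Mid} {q : Pid} {v : Val}
    {e : Exec} (h : LocRun S p l (.snd i p q v :: e) l'') :
    ∃ l', S.sendTr p l q v l' ∧ LocRun S p l' e l'' := by
  cases h with | send hs hrest => exact ⟨_, hs, hrest⟩

lemma locRun_recv_inv {S : System} {p : Pid} {l l'' : S.State} {i : Mid} {v : Val}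
    {e : Exec} (h : LocRun S p l (.rcv i p v :: e) l'') :
    ∃ l', S.recvTr p l v l' ∧ LocRun S p l' e l'' := by
  cases h with | recv hr hrest => exact ⟨_, hr, hrest⟩

lemma locrun_of_reach {S : System} {c c' : Config S} {e : Exec}
    (h : Reach S c e c') : ∀ p, LocRun S p (c.loc p) (proj p e) (c'.loc p) := by
  induction h with
  | nil c => intro p; rw [proj_nil]; exact LocRun.nil _
  | @cons c c1 c'' a e hstep hreach ih =>
    intro p
    cases hstep with
    | @send i p0 q v l' hs =>
      by_cases hp : p0 = p
      · subst hp
        rw [proj_cons_self (a := .snd i p0 q v) (p := p0) rfl]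
        have := ih p0
        simp only [Function.update_self] at this
        exact LocRun.send hs this
      · rw [proj_cons_ne (a := .snd i p0 q v) hp]
        have := ih p
        rwa [show (⟨Function.update c.loc p0 l',
          Function.update c.buf q (c.buf q ++ [(i, v)])⟩ : Config S).loc p = c.loc p from
          Function.update_of_ne (fun h => hp h.symm) _ _] at this
    | @recv i q v b l' hbuf hr =>
      by_cases hp : q = p
      · subst hp
        rw [proj_cons_self (a := .rcv i q v) (p := q) rfl]
        have := ih q
        simp only [Function.update_self] at this
        exact LocRun.recv hr this
      · rw [proj_cons_ne (a := .rcv i q v) hp]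
        have := ih p
        rwa [show (⟨Function.update c.loc q l',
          Function.update c.buf q b⟩ : Config S).loc p = c.loc p from
          Function.update_of_ne (fun h => hp h.symm) _ _] at this

lemma buffer_eq {S : System} {c c' : Config S} {e : Exec}
    (h : Reach S c e c') : ∀ q, c.buf q ++ sendsTo q e = recvsAt q e ++ c'.buf q := by
  induction h with
  | nil c => intro q; simp
  | @cons c c1 c'' a e hstep hreach ih =>
    intro q
    cases hstep with
    | @send i p0 q0 v l' hs =>
      by_cases hq : q0 = q
      · subst hq
        rw [sendsTo_cons_snd_self, recvsAt_cons_snd]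
        have := ih q0
        simp only [Function.update_self] at this
        rw [← this]
        simp [List.append_assoc]
      · rw [sendsTo_cons_snd_ne hq, recvsAt_cons_snd]
        have := ih q
        rwa [show (⟨Function.update c.loc p0 l',
          Function.update c.buf q0 (c.buf q0 ++ [(i, v)])⟩ : Config S).buf q = c.buf q from
          Function.update_of_ne (fun h => hq h.symm) _ _] at this
    | @recv i q0 v b l' hbuf hr =>
      by_cases hq : q0 = q
      · subst hq
        rw [sendsTo_cons_rcv, recvsAt_cons_rcv_self]
        have := ih q0
        simp only [Function.update_self] at this
        rw [hbuf]
        simp [this]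
      · rw [sendsTo_cons_rcv, recvsAt_cons_rcv_ne hq]
        have := ih q
        rwa [show (⟨Function.update c.loc q0 l',
          Function.update c.buf q0 b⟩ : Config S).buf q = c.buf q from
          Function.update_of_ne (fun h => hq h.symm) _ _] at this

/-- Replay lemma: an execution whose per-process projections admit local runs and whose
receives are FIFO-consistent with the buffers is executable. -/
lemma replay (S : System) :
    ∀ (f : Exec) (c : Config S) (Lf : Pid → S.State),
    (∀ p, LocRun S p (c.loc p) (proj p f) (Lf p)) →
    (∀ q g, g <+: f → recvsAt q g <+: c.buf q ++ sendsTo q g) →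
    ∃ c' : Config S, Reach S c f c' ∧ (∀ p, c'.loc p = Lf p) := by
  intro f
  induction f with
  | nil =>
    intro c Lf hL _
    refine ⟨c, Reach.nil c, fun p => ?_⟩
    have := hL p
    rw [proj_nil] at this
    exact locRun_nil_inv this
  | cons a t ih =>
    intro c Lf hL hB
    cases a with
    | snd i p q v =>
      have hp : LocRun S p (c.loc p) (.snd i p q v :: proj p t) (Lf p) := by
        have := hL p
        rwa [proj_cons_self (a := .snd i p q v) (p := p) rfl] at this
      obtain ⟨l', hs, hrest⟩ := locRun_send_inv hp
      · set c1 : Config S :=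
          ⟨Function.update c.loc p l', Function.update c.buf q (c.buf q ++ [(i, v)])⟩ with hc1
        have hstep : Step S c (.snd i p q v) c1 := Step.send hs
        have hL' : ∀ p', LocRun S p' (c1.loc p') (proj p' t) (Lf p') := by
          intro p'
          by_cases hpp : p' = p
          · subst hpp
            show LocRun S p' (Function.update c.loc p' l' p') _ _
            rwa [Function.update_self]
          · have := hL p'
            rw [proj_cons_ne (a := .snd i p q v) (fun h => hpp h.symm)] at this
            show LocRun S p' (Function.update c.loc p l' p') _ _
            rwa [Function.update_of_ne hpp]
        have hB' : ∀ q' g, g <+: t → recvsAt q' g <+: c1.buf q' ++ sendsTo q' g := by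
          intro q' g hg
          have h0 := hB q' (.snd i p q v :: g) (List.cons_prefix_cons.mpr ⟨rfl, hg⟩)
          rw [recvsAt_cons_snd] at h0
          by_cases hq : q' = q
          · subst hq
            rw [sendsTo_cons_snd_self] at h0
            show recvsAt q' g <+: Function.update c.buf q' (c.buf q' ++ [(i, v)]) q' ++ _
            rw [Function.update_self, List.append_assoc, List.singleton_append]
            exact h0
          · rw [sendsTo_cons_snd_ne (fun h => hq h.symm)] at h0
            show recvsAt q' g <+: Function.update c.buf q (c.buf q ++ [(i, v)]) q' ++ _
            rwa [Function.update_of_ne hq]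
        obtain ⟨c', hreach, hloc⟩ := ih c1 Lf hL' hB'
        exact ⟨c', Reach.cons hstep hreach, hloc⟩
    | rcv i q v =>
      have h1 := hB q [.rcv i q v] ⟨t, rfl⟩
      rw [recvsAt_cons_rcv_self, sendsTo_cons_rcv] at h1
      simp only [recvsAt_nil, sendsTo_nil, List.append_nil] at h1
      obtain ⟨b, hb⟩ : ∃ b, c.buf q = (i, v) :: b := by
        obtain ⟨tl, htl⟩ := h1
        exact ⟨tl, htl.symm⟩
      have hp : LocRun S q (c.loc q) (.rcv i q v :: proj q t) (Lf q) := by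
        have := hL q
        rwa [proj_cons_self (a := .rcv i q v) (p := q) rfl] at this
      obtain ⟨l', hr, hrest⟩ := locRun_recv_inv hp
      · set c1 : Config S := ⟨Function.update c.loc q l', Function.update c.buf q b⟩ with hc1
        have hstep : Step S c (.rcv i q v) c1 := Step.recv hb hr
        have hL' : ∀ p', LocRun S p' (c1.loc p') (proj p' t) (Lf p') := by
          intro p'
          by_cases hpp : p' = q
          · subst hpp
            show LocRun S p' (Function.update c.loc p' l' p') _ _
            rwa [Function.update_self]
          · have := hL p'
            rw [proj_cons_ne (a := .rcv i q v) (fun h => hpp h.symm)] at this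
            show LocRun S p' (Function.update c.loc q l' p') _ _
            rwa [Function.update_of_ne hpp]
        have hB' : ∀ q' g, g <+: t → recvsAt q' g <+: c1.buf q' ++ sendsTo q' g := by
          intro q' g hg
          have h0 := hB q' (.rcv i q v :: g) (List.cons_prefix_cons.mpr ⟨rfl, hg⟩)
          rw [sendsTo_cons_rcv] at h0
          by_cases hq : q' = q
          · subst hq
            rw [recvsAt_cons_rcv_self, hb] at h0
            show recvsAt q' g <+: Function.update c.buf q' b q' ++ _
            rw [Function.update_self]
            exact (by simpa using h0)
          · rw [recvsAt_cons_rcv_ne (fun h => hq h.symm)] at h0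
            show recvsAt q' g <+: Function.update c.buf q b q' ++ _
            rwa [Function.update_of_ne hq]
        obtain ⟨c', hreach, hloc⟩ := ih c1 Lf hL' hB'
        exact ⟨c', Reach.cons hstep hreach, hloc⟩
lemma pairwise_indexOf_lt {L : List Mid} (hL : L.Nodup) :
    L.Pairwise (fun a b => L.idxOf a < L.idxOf b) := by
  induction L with
  | nil => exact List.Pairwise.nil
  | cons x t ih =>
    have hx : x ∉ t := (List.nodup_cons.mp hL).1
    have ht : t.Nodup := (List.nodup_cons.mp hL).2
    refine List.Pairwise.cons ?_ ?_
    · intro b hb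
      rw [List.idxOf_cons_self, List.idxOf_cons_ne _ (fun h => hx (by rw [h]; exact hb))]
      exact Nat.succ_pos _
    · exact List.Pairwise.imp_of_mem (fun {a b} ha hb h => by
        rw [List.idxOf_cons_ne _ (fun he => hx (by rw [he]; exact ha)),
            List.idxOf_cons_ne _ (fun he => hx (by rw [he]; exact hb))]
        exact Nat.succ_lt_succ h) (ih ht)

lemma pairwise_filterMap' {α β : Type*} {R : α → α → Prop} {R' : β → β → Prop}
    (f : α → Option β) (H : ∀ a b x y, R a b → f a = some x → f b = some y → R' x y) :
    ∀ {l : List α}, l.Pairwise R → (l.filterMap f).Pairwise R' := by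
  intro l h
  induction l with
  | nil => simp
  | cons a t ih =>
    rw [List.filterMap_cons]
    rcases List.pairwise_cons.mp h with ⟨h1, h2⟩
    cases hfa : f a with
    | none => exact ih h2
    | some x =>
      refine List.pairwise_cons.mpr ⟨?_, ih h2⟩
      intro y hy
      obtain ⟨b, hb, hfb⟩ := List.mem_filterMap.mp hy
      exact H a b x y (h1 b hb) hfa hfb

lemma recv_in_blocks {k : ℕ} {l : Exec} (hB : Blocks k l) :
    ∀ i q v, Action.rcv i q v ∈ l → ∃ p, Action.snd i p q v ∈ l := by
  induction hB with
  | nil => intro i q v h; simp at h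
  | @app b e hb hBe ih =>
    intro i q v h
    rcases List.mem_append.mp h with h | h
    · obtain ⟨sends, recvs, rfl, hS, hR, hlen, hm⟩ := hb
      rcases List.mem_append.mp h with h | h
      · exact absurd (hS _ h) (by simp [Action.isSend])
      · obtain ⟨p, hp⟩ := hm i q v h
        exact ⟨p, List.mem_append_left _ (List.mem_append_left _ hp)⟩
    · obtain ⟨p, hp⟩ := ih i q v h
      exact ⟨p, List.mem_append_right _ hp⟩

lemma prefix_append_cases {α : Type*} {g x y : List α} (h : g <+: x ++ y) :
    g <+: x ∨ ∃ h', g = x ++ h' ∧ h' <+: y := by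
  obtain ⟨t, ht⟩ := h
  rcases List.append_eq_append_iff.mp ht with ⟨a', ha1, _⟩ | ⟨c', hc1, hc2⟩
  · exact Or.inl ⟨a', ha1.symm⟩
  · exact Or.inr ⟨c', hc1, ⟨t, hc2.symm⟩⟩

/-- Reorder the sends inside each block of a matched block execution so that it becomes
FIFO-consistent, preserving per-process projections. -/
lemma transform {k : ℕ} (L : List Mid) (hL : L.Nodup) (E : Exec)
    (hE : ∀ q, (recvsAt q E).Pairwise
      (fun x y : Mid × Val => L.idxOf x.1 < L.idxOf y.1))
    (hEp : ∀ p, sendIds (proj p E) <+ L)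
    (hmemE : ∀ i, i ∈ sendIds E → i ∈ L) :
    ∀ f, Blocks k f →
      f <+ E → (∀ i p q v, Action.snd i p q v ∈ f → Action.rcv i q v ∈ f) →
      (sendIds f).Nodup →
      ∃ f', f.Perm f' ∧ Blocks k f' ∧ (∀ p, proj p f' = proj p f) ∧
        (∀ q g, g <+: f' → recvsAt q g <+: sendsTo q g) ∧
        (∀ q, sendsTo q f' = recvsAt q f') := by
  intro f hB
  induction hB with
  | nil =>
    intro _ _ _
    exact ⟨[], List.Perm.refl _, Blocks.nil, fun p => rfl,
      fun q g hg => by rw [List.prefix_nil.mp hg]; exact List.nil_prefix, fun q => rfl⟩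
  | @app b e hb hBe ih =>
    intro hsub hM hN
    obtain ⟨sends, recvs, hbe, hS, hR, hlen, hmatch⟩ := hb
    subst hbe
    -- key order
    set key : Action → ℕ := fun a => L.idxOf a.mid with hkeydef
    haveI : Std.Antisymm (α := Action) (fun a b => key a < key b) :=
      ⟨fun a b h1 h2 => absurd (Nat.lt_trans h1 h2) (lt_irrefl _)⟩
    haveI : Std.Antisymm (α := Mid × Val) (fun x y => L.idxOf x.1 < L.idxOf y.1) :=
      ⟨fun a b h1 h2 => absurd (Nat.lt_trans h1 h2) (lt_irrefl _)⟩
    set r : Action → Action → Prop := fun a b => key a ≤ key b with hrdef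
    haveI : DecidableRel r := fun a b => Nat.decLe _ _
    haveI : Std.Total r := ⟨fun a b => Nat.le_total _ _⟩
    haveI : IsTrans Action r := ⟨fun a b c h1 h2 => Nat.le_trans h1 h2⟩
    -- sublists
    have hsubS : sends <+ (sends ++ recvs) ++ e :=
      (List.sublist_append_left sends recvs).trans (List.sublist_append_left _ e)
    have hsubR : recvs <+ (sends ++ recvs) ++ e :=
      (List.sublist_append_right sends recvs).trans (List.sublist_append_left _ e)
    have hsubE' : e <+ (sends ++ recvs) ++ e := List.sublist_append_right _ _
    have hSE : sends <+ E := hsubS.trans hsub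
    have hRE : recvs <+ E := hsubR.trans hsub
    have hEE : e <+ E := hsubE'.trans hsub
    -- nodup pieces
    have hNs : (sendIds sends).Nodup :=
      List.Nodup.sublist (List.Sublist.filterMap _ hsubS) hN
    have hNe : (sendIds e).Nodup :=
      List.Nodup.sublist (List.Sublist.filterMap _ hsubE') hN
    have hN2 : (sendIds (sends ++ recvs) ++ sendIds e).Nodup := by
      rwa [← sendIds_append]
    have hdisj : List.Disjoint (sendIds (sends ++ recvs)) (sendIds e) :=
      List.disjoint_of_nodup_append hN2
    -- block-local matching
    have hMb : ∀ i p q v, Action.snd i p q v ∈ sends → Action.rcv i q v ∈ recvs := by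
      intro i p q v hmem
      have hrc := hM i p q v (List.mem_append_left _ (List.mem_append_left _ hmem))
      rcases List.mem_append.mp hrc with h | h
      · rcases List.mem_append.mp h with h | h
        · exact absurd (hS _ h) (by simp [Action.isSend])
        · exact h
      · obtain ⟨p', hp'⟩ := recv_in_blocks hBe i q v h
        exact absurd (mem_sendIds_of_mem hp')
          (hdisj (by rw [sendIds_append]
                     exact List.mem_append_left _ (mem_sendIds_of_mem hmem)))
    have hMe : ∀ i p q v, Action.snd i p q v ∈ e → Action.rcv i q v ∈ e := by
      intro i p q v hmem
      have hrc := hM i p q v (List.mem_append_right _ hmem)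
      rcases List.mem_append.mp hrc with h | h
      · rcases List.mem_append.mp h with h | h
        · exact absurd (hS _ h) (by simp [Action.isSend])
        · obtain ⟨p', hp'⟩ := hmatch i q v h
          exact absurd (mem_sendIds_of_mem hmem)
            (hdisj (by rw [sendIds_append]
                       exact List.mem_append_left _ (mem_sendIds_of_mem hp')))
      · exact h
    -- sorted sends
    set sends' := sends.insertionSort r with hsends'
    have hperm : sends'.Perm sends := List.perm_insertionSort r sends
    have hsorted : sends'.Pairwise r := List.pairwise_insertionSort r sends
    have hS' : ∀ a ∈ sends', a.isSend := fun a ha => hS a (hperm.mem_iff.mp ha)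
    have hmidS : sendIds sends = sends.map Action.mid := sendIds_eq_map_mid hS
    have hNmid : (sends.map Action.mid).Nodup := hmidS ▸ hNs
    have hmidL : ∀ a ∈ sends, a.mid ∈ L := by
      intro a ha
      match a, hS a ha with
      | .snd i p q v, _ => exact hmemE i (mem_sendIds_of_mem (hSE.subset ha))
    have hkeyN : (sends.map key).Nodup := by
      have hmm : sends.map key = (sends.map Action.mid).map (fun i => L.idxOf i) := by
        rw [List.map_map]; rfl
      rw [hmm]
      refine List.Nodup.map_on ?_ hNmid
      intro x hx y hy hxy
      obtain ⟨ax, hax, rfl⟩ := List.mem_map.mp hx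
      obtain ⟨ay, hay, rfl⟩ := List.mem_map.mp hy
      exact (List.idxOf_inj (hmidL ax hax)).mp hxy
    have hkeyN' : (sends'.map key).Nodup := ((hperm.map key).nodup_iff).mpr hkeyN
    have hne : sends'.Pairwise (fun a b => key a ≠ key b) := List.pairwise_map.mp hkeyN'
    have hstrict : sends'.Pairwise (fun a b => key a < key b) :=
      (List.Pairwise.and hsorted hne).imp (fun h => lt_of_le_of_ne h.1 h.2)
    -- projections of the sorted sends
    have hprojS : ∀ p, proj p sends' = proj p sends := by
      intro p
      have hpermp : proj p sends' ~ proj p sends := hperm.filter _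
      have hs1 : (proj p sends').Pairwise (fun a b => key a < key b) :=
        List.Pairwise.sublist List.filter_sublist hstrict
      have hallS : ∀ a ∈ proj p sends, a.isSend :=
        fun a ha => hS a (List.mem_of_mem_filter ha)
      have hsubmid : List.map Action.mid (proj p sends) <+ L := by
        rw [← sendIds_eq_map_mid hallS]
        exact (List.Sublist.filterMap _ (List.Sublist.filter _ hSE)).trans (hEp p)
      have hmid2 : (List.map Action.mid (proj p sends)).Pairwise
          (fun a b => L.idxOf a < L.idxOf b) :=
        List.Pairwise.sublist hsubmid (pairwise_indexOf_lt hL)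
      have hs2 : (proj p sends).Pairwise (fun a b => key a < key b) :=
        (List.pairwise_map (f := Action.mid)
          (R := fun i j => L.idxOf i < L.idxOf j)).mp hmid2
      exact List.Perm.eq_of_pairwise' hs1 hs2 hpermp
    -- per-destination equality of sends' with the receives of the block
    have hkeyq : ∀ q, sendsTo q sends' = recvsAt q recvs := by
      intro q
      have hsortL : (sendsTo q sends').Pairwise
          (fun x y : Mid × Val => L.idxOf x.1 < L.idxOf y.1) := by
        refine pairwise_filterMap' _ ?_ hstrict
        intro a b x y hab hfa hfb
        have hxa : x.1 = a.mid := by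
          cases a with
          | snd i p q' v =>
            by_cases hq : q' = q
            · subst hq
              simp at hfa
              rw [← hfa]
              rfl
            · simp [hq] at hfa

          | rcv _ _ _ => simp at hfa
        have hyb : y.1 = b.mid := by
          cases b with
          | snd i p q' v =>
            by_cases hq : q' = q
            · subst hq
              simp at hfb
              rw [← hfb]
              rfl
            · simp [hq] at hfb

          | rcv _ _ _ => simp at hfb
        rw [hxa, hyb]; exact hab
      have hsortR : (recvsAt q recvs).Pairwise
          (fun x y : Mid × Val => L.idxOf x.1 < L.idxOf y.1) :=
        List.Pairwise.sublist (List.Sublist.filterMap _ hRE) (hE q)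
      have hndL : (sendsTo q sends').Nodup :=
        hsortL.imp (fun {x y} h => fun heq => absurd (heq ▸ h) (lt_irrefl _))
      have hndR : (recvsAt q recvs).Nodup :=
        hsortR.imp (fun {x y} h => fun heq => absurd (heq ▸ h) (lt_irrefl _))
      have hmem : ∀ x, x ∈ sendsTo q sends' ↔ x ∈ recvsAt q recvs := by
        rintro ⟨i, v⟩
        constructor
        · intro hx
          have hx' : (i, v) ∈ sendsTo q sends := ((hperm.filterMap _).mem_iff).mp hx
          obtain ⟨p, hp⟩ := mem_sendsTo.mp hx'
          exact mem_recvsAt.mpr (hMb i p q v hp)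
        · intro hx
          obtain ⟨p, hp⟩ := hmatch i q v (mem_recvsAt.mp hx)
          exact ((hperm.filterMap _).mem_iff).mpr (mem_sendsTo.mpr ⟨p, hp⟩)
      exact List.Perm.eq_of_pairwise' hsortL hsortR
        ((List.perm_ext_iff_of_nodup hndL hndR).mpr hmem)
    -- the transformed block
    have hBlock : Block k (sends' ++ recvs) :=
      ⟨sends', recvs, rfl, hS', hR, by rw [hperm.length_eq]; exact hlen,
        fun i q v hr => (hmatch i q v hr).imp (fun p hp => (hperm.mem_iff).mpr hp)⟩
    -- induction on the remaining blocks
    obtain ⟨e', hperm_e, hBlocks_e, hproj_e, hpre_e, hbal_e⟩ := ih hEE hMe hNe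
    -- assemble
    have hRecvS' : ∀ q, recvsAt q sends' = [] := fun q => recvsAt_eq_nil hS'
    have hSendR : ∀ q, sendsTo q recvs = [] := fun q => sendsTo_eq_nil hR
    have hbalB : ∀ q, sendsTo q (sends' ++ recvs) = recvsAt q (sends' ++ recvs) := by
      intro q
      rw [sendsTo_append, recvsAt_append, hSendR, hRecvS', hkeyq]
      simp
    have hpreB : ∀ q g, g <+: sends' ++ recvs → recvsAt q g <+: sendsTo q g := by
      intro q g hg
      rcases prefix_append_cases hg with hg | ⟨h', rfl, hh⟩
      · have hgs : ∀ a ∈ g, a.isSend := fun a ha => hS' a (hg.sublist.subset ha)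
        rw [recvsAt_eq_nil hgs]
        exact List.nil_prefix
      · rw [recvsAt_append, sendsTo_append, hRecvS',
          sendsTo_eq_nil (fun a ha => hR a (hh.sublist.subset ha))]
        simp only [List.nil_append, List.append_nil]
        rw [hkeyq]
        obtain ⟨t2, ht2⟩ := hh
        rw [← ht2, recvsAt_append]
        exact List.prefix_append _ _
    refine ⟨(sends' ++ recvs) ++ e',
      (hperm.symm.append_right recvs).append hperm_e,
      Blocks.app hBlock hBlocks_e, ?_, ?_, ?_⟩
    · intro p
      simp only [proj_append]
      rw [hprojS p, hproj_e p]
    · intro q g hg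
      rcases prefix_append_cases hg with hg | ⟨h', rfl, hh⟩
      · exact hpreB q g hg
      · rw [recvsAt_append, sendsTo_append, ← hbalB q]
        exact (List.prefix_append_right_inj _).mpr (hpre_e q h' hh)
    · intro q
      rw [sendsTo_append, recvsAt_append, hbalB, hbal_e]
/-- A `k`-synchronizable system reaches an empty-buffer deadlock under the asynchronous
semantics iff its `k`-synchronous semantics admits a matched execution to an
empty-buffer deadlock configuration. -/
theorem emptyBuffer_deadlock_iff (S : System) (k : ℕ) (h : KSynchronizable S k) :
    (∃ (e : Exec) (c : Config S), (sendIds e).Nodup ∧ Reach S (initConfig S) e c ∧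
        (∀ q, c.buf q = []) ∧ DeadlockLocs S c.loc) ↔
    (∃ (e : Exec) (c : Config S), (sendIds e).Nodup ∧ Reach S (initConfig S) e c ∧
        Blocks k e ∧ Matched e ∧ DeadlockLocs S c.loc) := by
  constructor
  · rintro ⟨e, c, hnd, hreach, hbuf, hdl⟩
    have hAE : AsyncExec S e := ⟨hnd, c, hreach⟩
    obtain ⟨e', ⟨hperm', hproj'⟩, hsbr, hblocks⟩ := h e hAE
    have hbal : ∀ q, sendsTo q e = recvsAt q e := by
      intro q
      have hb := buffer_eq hreach q
      rw [hbuf q, List.append_nil] at hb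
      simpa [initConfig] using hb
    have hMe : Matched e := by
      intro i p q v hs
      have hm : (i, v) ∈ sendsTo q e := mem_sendsTo.mpr ⟨p, hs⟩
      rw [hbal q] at hm
      exact mem_recvsAt.mp hm
    have hrecvs_eq : ∀ q, recvsAt q e' = recvsAt q e := by
      intro q
      rw [← recvsAt_proj q e', ← hproj' q, recvsAt_proj]
    have hE : ∀ q, (recvsAt q e').Pairwise
        (fun x y : Mid × Val => (sendIds e).idxOf x.1 < (sendIds e).idxOf y.1) := by
      intro q
      rw [hrecvs_eq q, ← hbal q]
      have hsubm : (sendsTo q e).map Prod.fst <+ sendIds e := sendsTo_fst_sublist q e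
      exact (List.pairwise_map (f := Prod.fst)
          (R := fun i j => (sendIds e).idxOf i < (sendIds e).idxOf j)).mp
        (List.Pairwise.sublist hsubm (pairwise_indexOf_lt hnd))
    have hEp : ∀ p, sendIds (proj p e') <+ sendIds e := by
      intro p
      rw [← hproj' p]
      exact sendIds_proj_sublist p e
    have hmemE : ∀ i, i ∈ sendIds e' → i ∈ sendIds e :=
      fun i hi => ((hperm'.filterMap _).mem_iff).mpr hi
    have hM' : ∀ i p q v, Action.snd i p q v ∈ e' → Action.rcv i q v ∈ e' := by
      intro i p q v hs
      exact hperm'.mem_iff.mp (hMe i p q v (hperm'.mem_iff.mpr hs))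
    have hnd' : (sendIds e').Nodup := ((hperm'.filterMap _).nodup_iff).mp hnd
    obtain ⟨e'', hperm2, hblocks2, hproj2, hpre2, hbal2⟩ :=
      transform (sendIds e) hnd e' hE hEp hmemE e' hblocks (List.Sublist.refl e') hM' hnd'
    have hL : ∀ p, LocRun S p ((initConfig S).loc p) (proj p e'') (c.loc p) := by
      intro p
      rw [hproj2 p, ← hproj' p]
      exact locrun_of_reach hreach p
    have hB0 : ∀ q g, g <+: e'' → recvsAt q g <+: (initConfig S).buf q ++ sendsTo q g := by
      intro q g hg
      simpa [initConfig] using hpre2 q g hg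
    obtain ⟨c'', hreach'', hloc''⟩ := replay S e'' (initConfig S) c.loc hL hB0
    have hpe : e ~ e'' := hperm'.trans hperm2
    refine ⟨e'', c'', ((hpe.filterMap _).nodup_iff).mp hnd, hreach'', hblocks2, ?_, ?_⟩
    · intro i p q v hs
      exact hpe.mem_iff.mp (hMe i p q v (hpe.mem_iff.mpr hs))
    · have hcc : c''.loc = c.loc := funext hloc''
      rw [hcc]
      exact hdl
  · rintro ⟨e, c, hnd, hreach, hblocks, hM, hdl⟩
    refine ⟨e, c, hnd, hreach, ?_, hdl⟩
    intro q
    by_contra hne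
    obtain ⟨⟨i, v⟩, b, hb⟩ : ∃ x b, c.buf q = x :: b := by
      cases hcb : c.buf q with
      | nil => exact absurd hcb hne
      | cons x b => exact ⟨x, b, rfl⟩
    have heq := buffer_eq hreach q
    rw [hb] at heq
    simp only [initConfig, List.nil_append] at heq
    have hmem : (i, v) ∈ sendsTo q e := by
      rw [heq]
      exact List.mem_append_right _ List.mem_cons_self
    obtain ⟨p, hp⟩ := mem_sendsTo.mp hmem
    have hrc : (i, v) ∈ recvsAt q e := mem_recvsAt.mpr (hM i p q v hp)
    have hndS : ((sendsTo q e).map Prod.fst).Nodup :=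
      List.Nodup.sublist (sendsTo_fst_sublist q e) hnd
    rw [heq, List.map_append] at hndS
    have hdisj := List.disjoint_of_nodup_append hndS
    exact hdisj (List.mem_map.mpr ⟨(i, v), hrc, rfl⟩) (by simp)

end MP
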